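/- Let d(n) = (n / 8^{n-1}) · (α/6)^{n-1} for n ≥ 1, where α is a real number. Then d(1) = 1 and for every n ≥ 2, (n² − 1)·d(n) = (α/8)·Σ_{j=1}^{n-1} d(j)·d(n−j). -/

import Mathlib

lemma sum_icc_id (m : ℕ) : ∑ j ∈ Finset.Icc 1 m, (j : ℝ) = m * (m + 1) / 2 := by
  induction m with
  | zero => simp
  | succ k ih =>
    rw [Finset.sum_Icc_succ_top (by omega), ih]
    push_cast; ring

lemma sum_icc_sq (m : ℕ) : ∑ j ∈ Finset.Icc 1 m, (j : ℝ) ^ 2 = m * (m + 1) * (2 * m + 1) / 6 := by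
  induction m with
  | zero => simp
  | succ k ih =>
    rw [Finset.sum_Icc_succ_top (by omega), ih]
    push_cast; ring

theorem stmt_9 (α : ℝ) (d : ℕ → ℝ)
    (hd : ∀ n : ℕ, 1 ≤ n → d n = (n : ℝ) / 8 ^ (n - 1) * (α / 6) ^ (n - 1)) :
    d 1 = 1 ∧ ∀ n : ℕ, 2 ≤ n →
      ((n : ℝ) ^ 2 - 1) * d n = (α / 8) * ∑ j ∈ Finset.Icc 1 (n - 1), d j * d (n - j) := by
  constructor
  · rw [hd 1 le_rfl]; norm_num
  · intro n hn
    obtain ⟨m, rfl⟩ : ∃ m, n = m + 2 := ⟨n - 2, by omega⟩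
    have hsum : ∑ j ∈ Finset.Icc 1 (m + 2 - 1), d j * d (m + 2 - j)
        = ∑ j ∈ Finset.Icc 1 (m + 1),
            ((j : ℝ) * ((m : ℝ) + 2 - j)) * ((1 / 8) ^ m * (α / 6) ^ m) := by
      refine Finset.sum_congr rfl ?_
      intro j hj
      simp only [Finset.mem_Icc] at hj
      obtain ⟨a, rfl⟩ : ∃ a, j = a + 1 := ⟨j - 1, by omega⟩
      obtain ⟨b, rfl⟩ : ∃ b, m = a + b := ⟨m - a, by omega⟩
      have h1 : a + b + 2 - (a + 1) = b + 1 := by omega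
      rw [hd (a + 1) (by omega), h1, hd (b + 1) (by omega)]
      simp only [Nat.add_sub_cancel]
      push_cast
      simp only [div_pow, one_pow, pow_add]
      field_simp
      ring
    rw [hsum, ← Finset.sum_mul]
    have hpoly : ∑ j ∈ Finset.Icc 1 (m + 1), ((j : ℝ) * ((m : ℝ) + 2 - j))
        = ∑ j ∈ Finset.Icc 1 (m + 1), (((m : ℝ) + 2) * (j : ℝ) - (j : ℝ) ^ 2) := by
      refine Finset.sum_congr rfl fun j _ => by ring
    rw [hpoly, Finset.sum_sub_distrib, ← Finset.mul_sum, sum_icc_id, sum_icc_sq,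
      hd (m + 2) (by omega), (by omega : m + 2 - 1 = m + 1)]
    push_cast
    rw [pow_succ]
    simp only [div_pow, one_pow]
    ring
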